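/- Consider a proper (Δ+1)-colouring of a graph on vertex set D with maximum degree at most Δ that minimizes the sum of the squares of the colour class sizes. If some colour class has size at least 3, then the singleton colour classes form a clique. -/

import Mathlib

/-- In a proper `(Δ+1)`-colouring minimizing the sum of squares of colour class
sizes, if some colour class has size at least 3, the singleton colour classes
form a clique. -/
theorem stmt3 (V : Type) [Fintype V] (D : SimpleGraph V) (Δ : ℕ)
    (hdeg : ∀ v, (D.neighborSet v).ncard ≤ Δ)
    (f : V → Fin (Δ + 1)) (hf : ∀ u v, D.Adj u v → f u ≠ f v)
    (hmin : ∀ g : V → Fin (Δ + 1), (∀ u v, D.Adj u v → g u ≠ g v) →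
      ∑ a : Fin (Δ + 1), ({u : V | f u = a}.ncard) ^ 2 ≤
        ∑ a : Fin (Δ + 1), ({u : V | g u = a}.ncard) ^ 2)
    (h3 : ∃ a : Fin (Δ + 1), 3 ≤ {u : V | f u = a}.ncard) :
    ∀ v w : V, v ≠ w → {u : V | f u = f v}.ncard = 1 →
      {u : V | f u = f w}.ncard = 1 → D.Adj v w := by
  classical
  intro v w hvw hv hw
  by_contra hadj
  obtain ⟨a, ha⟩ := h3
  -- singleton classes
  have hclv : {u : V | f u = f v} = {v} := by
    obtain ⟨y, hy⟩ := Set.ncard_eq_one.mp hv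
    have : v ∈ ({y} : Set V) := hy ▸ (by simp : v ∈ {u : V | f u = f v})
    simp at this; rw [hy, this]
  have hclw : {u : V | f u = f w} = {w} := by
    obtain ⟨y, hy⟩ := Set.ncard_eq_one.mp hw
    have : w ∈ ({y} : Set V) := hy ▸ (by simp : w ∈ {u : V | f u = f w})
    simp at this; rw [hy, this]
  have hfvw : f v ≠ f w := by
    intro h
    have : w ∈ {u : V | f u = f v} := by simp [h]
    rw [hclv] at this; exact hvw (this.symm)
  have hafv : a ≠ f v := by
    intro h; rw [h, hv] at ha; omega
  have hafw : a ≠ f w := by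
    intro h; rw [h, hw] at ha; omega
  -- pick x in the big class
  have hane : {u : V | f u = a}.Nonempty := by
    apply Set.nonempty_of_ncard_ne_zero; omega
  obtain ⟨x, hx⟩ := hane
  have hfx : f x = a := hx
  have hxv : x ≠ v := fun h => hafv (h ▸ hfx).symm
  have hxw : x ≠ w := fun h => hafw (h ▸ hfx).symm
  -- new colouring
  set g : V → Fin (Δ + 1) := fun u => if u = w then f v else if u = x then f w else f u with hg
  have gval : ∀ u, u ≠ w → u ≠ x → g u = f u := by
    intro u h1 h2; simp [hg, h1, h2]
  have gw : g w = f v := by simp [hg]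
  have gx : g x = f w := by simp [hg, hxw]
  have hfuv : ∀ u, f u = f v → u = v := by
    intro u h
    have : u ∈ {u : V | f u = f v} := h
    rw [hclv] at this; exact this
  have hfuw : ∀ u, f u = f w → u = w := by
    intro u h
    have : u ∈ {u : V | f u = f w} := h
    rw [hclw] at this; exact this
  have hgval : ∀ u, g u = f v ↔ (u = v ∨ u = w) := by
    intro u
    constructor
    · intro h
      by_cases h1 : u = w
      · exact Or.inr h1
      by_cases h2 : u = x
      · rw [h2, gx] at h; exact absurd h.symm hfvw
      · rw [gval u h1 h2] at h; exact Or.inl (hfuv u h)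
    · rintro (rfl | rfl)
      · rw [gval u hvw (Ne.symm hxv)]
      · exact gw
  have hgproper : ∀ u₁ u₂, D.Adj u₁ u₂ → g u₁ ≠ g u₂ := by
    intro u₁ u₂ hadj' heq
    by_cases h1 : u₁ = w
    · subst h1
      rw [gw] at heq
      rcases (hgval u₂).mp heq.symm with rfl | rfl
      · exact hadj (D.adj_symm hadj')
      · exact D.loopless.irrefl _ hadj'
    · by_cases h2 : u₂ = w
      · subst h2
        rw [gw] at heq
        rcases (hgval u₁).mp heq with rfl | rfl
        · exact hadj hadj'
        · exact D.loopless.irrefl _ hadj'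
      · by_cases h3 : u₁ = x
        · subst h3
          rw [gx, gval u₂ h2 (by rintro rfl; exact D.loopless.irrefl _ hadj')] at heq
          exact h2 (hfuw u₂ heq.symm)
        · by_cases h4 : u₂ = x
          · subst h4
            rw [gx, gval u₁ h1 (by rintro rfl; exact D.loopless.irrefl _ hadj')] at heq
            exact h1 (hfuw u₁ heq)
          · rw [gval u₁ h1 h3, gval u₂ h2 h4] at heq
            exact hf u₁ u₂ hadj' heq
  -- colour classes of g
  have Tv : {u : V | g u = f v} = {v, w} := by
    ext u; simp [hgval u]
  have Tw : {u : V | g u = f w} = {x} := by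
    ext u
    simp only [Set.mem_setOf_eq, Set.mem_singleton_iff]
    constructor
    · intro h
      by_cases h1 : u = w
      · subst h1; rw [gw] at h; exact absurd h hfvw
      by_cases h2 : u = x
      · exact h2
      · rw [gval u h1 h2] at h; exact absurd (hfuw u h) h1
    · rintro rfl; exact gx
  have Ta : {u : V | g u = a} = {u : V | f u = a} \ {x} := by
    ext u
    simp only [Set.mem_setOf_eq, Set.mem_diff, Set.mem_singleton_iff]
    constructor
    · intro h
      by_cases h1 : u = w
      · subst h1; rw [gw] at h; exact absurd h.symm hafv
      by_cases h2 : u = x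
      · subst h2; rw [gx] at h; exact absurd h.symm hafw
      · rw [gval u h1 h2] at h; exact ⟨h, h2⟩
    · rintro ⟨h, h2⟩
      have h1 : u ≠ w := by rintro rfl; exact hafw h.symm
      rw [gval u h1 h2]; exact h
  have Tother : ∀ c : Fin (Δ + 1), c ≠ f v → c ≠ f w → c ≠ a →
      {u : V | g u = c} = {u : V | f u = c} := by
    intro c h1 h2 h3
    ext u
    simp only [Set.mem_setOf_eq]
    constructor
    · intro h
      by_cases hu1 : u = w
      · subst hu1; rw [gw] at h; exact absurd h.symm h1
      by_cases hu2 : u = x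
      · subst hu2; rw [gx] at h; exact absurd h.symm h2
      · rwa [gval u hu1 hu2] at h
    · intro h
      have hu1 : u ≠ w := by rintro rfl; exact h2 h.symm
      have hu2 : u ≠ x := by rintro rfl; rw [hfx] at h; exact h3 h.symm
      rw [gval u hu1 hu2]; exact h
  -- ncards
  have hfin : ∀ s : Set V, s.Finite := fun s => s.toFinite
  have nTv : {u : V | g u = f v}.ncard = 2 := by
    rw [Tv, Set.ncard_pair hvw]
  have nTw : {u : V | g u = f w}.ncard = 1 := by
    rw [Tw, Set.ncard_singleton]
  have nTa : {u : V | g u = a}.ncard = {u : V | f u = a}.ncard - 1 := by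
    rw [Ta, Set.ncard_diff_singleton_of_mem hx]
  -- sum comparison
  have hsum := hmin g hgproper
  set S : Fin (Δ + 1) → ℕ := fun c => {u : V | f u = c}.ncard with hS
  set T : Fin (Δ + 1) → ℕ := fun c => {u : V | g u = c}.ncard with hT
  have hA : ({f v, f w, a} : Finset (Fin (Δ + 1))) ⊆ Finset.univ := Finset.subset_univ _
  have hsplit : ∀ F : Fin (Δ + 1) → ℕ,
      ∑ c, F c = F (f v) + F (f w) + F a + ∑ c ∈ Finset.univ \ {f v, f w, a}, F c := by
    intro F
    rw [← Finset.sum_sdiff hA]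
    have : ∑ c ∈ ({f v, f w, a} : Finset (Fin (Δ + 1))), F c = F (f v) + F (f w) + F a := by
      rw [Finset.sum_insert (by simp [hfvw, hafv.symm]),
          Finset.sum_insert (by simp [hafw.symm]), Finset.sum_singleton]
      ring
    rw [this]; ring
  have heqother : ∑ c ∈ Finset.univ \ {f v, f w, a}, T c ^ 2
      = ∑ c ∈ Finset.univ \ {f v, f w, a}, S c ^ 2 := by
    apply Finset.sum_congr rfl
    intro c hc
    simp only [Finset.mem_sdiff, Finset.mem_insert, Finset.mem_singleton] at hc
    push_neg at hc
    show {u : V | g u = c}.ncard ^ 2 = {u : V | f u = c}.ncard ^ 2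
    rw [Tother c hc.2.1 hc.2.2.1 hc.2.2.2]
  have hSv : S (f v) = 1 := hv
  have hSw : S (f w) = 1 := hw
  have hlt : ∑ c, T c ^ 2 < ∑ c, S c ^ 2 := by
    rw [hsplit (fun c => T c ^ 2), hsplit (fun c => S c ^ 2), heqother]
    apply Nat.add_lt_add_right
    have hTv' : T (f v) = 2 := nTv
    have hTw' : T (f w) = 1 := nTw
    have hTa' : T a = S a - 1 := nTa
    rw [hTv', hTw', hTa', hSv, hSw]
    have h3' : 3 ≤ S a := ha
    obtain ⟨k, hk⟩ : ∃ k, S a = k + 3 := ⟨S a - 3, by omega⟩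
    rw [hk]
    have hk2 : k + 3 - 1 = k + 2 := by omega
    rw [hk2]
    nlinarith
  exact absurd hsum (not_le.mpr hlt)
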